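/- Let X be a finite set, σ₁, …, σ_r commuting involutions of X, and ε₁, …, ε_r ∈ {+1, −1}. Let W = {f : X → ℂ | f ∘ σᵢ = εᵢ · f for all i} and W⁺ = {f : X → ℂ | f ∘ σᵢ = f for all i}. Then dim_ℂ W ≤ dim_ℂ W⁺. -/
import Mathlib


/-- The joint eigenspace `{f : X → ℂ | f ∘ σ i = ε i • f for all i}` as a subspace of
the space of functions `X → ℂ`. -/
noncomputable def jointEigenspace {X : Type*} {r : ℕ} (σ : Fin r → X → X) (ε : Fin r → ℂ) :
    Submodule ℂ (X → ℂ) where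
  carrier := {f | ∀ (i : Fin r) (x : X), f (σ i x) = ε i * f x}
  add_mem' := by
    intro f g hf hg i x
    simp only [Pi.add_apply, hf i x, hg i x]
    ring
  zero_mem' := by intro i x; simp
  smul_mem' := by
    intro c f hf i x
    simp only [Pi.smul_apply, smul_eq_mul, hf i x]
    ring

/-- The setoid generated by the maps `σ i` (orbit equivalence). -/
def sigmaSetoid {X : Type*} {r : ℕ} (σ : Fin r → X → X) : Setoid X :=
  ⟨Relation.EqvGen (fun x y => ∃ i, y = σ i x), Relation.EqvGen.is_equivalence _⟩

lemma zero_iff_of_eqvGen {X : Type*} {r : ℕ} {σ : Fin r → X → X} {ε : Fin r → ℂ}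
    (hε : ∀ i, ε i ≠ 0) {f : X → ℂ}
    (hf : ∀ (i : Fin r) (x : X), f (σ i x) = ε i * f x) {x y : X}
    (h : Relation.EqvGen (fun x y => ∃ i, y = σ i x) x y) : f x = 0 ↔ f y = 0 := by
  induction h with
  | rel x y h =>
    obtain ⟨i, rfl⟩ := h
    rw [hf i x]
    simp [hε i]
  | refl => exact Iff.rfl
  | symm _ _ _ ih => exact ih.symm
  | trans _ _ _ _ _ ih1 ih2 => exact ih1.trans ih2

lemma const_of_eqvGen {X : Type*} {r : ℕ} {σ : Fin r → X → X} {f : X → ℂ}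
    (hf : ∀ (i : Fin r) (x : X), f (σ i x) = f x) {x y : X}
    (h : Relation.EqvGen (fun x y => ∃ i, y = σ i x) x y) : f x = f y := by
  induction h with
  | rel x y h => obtain ⟨i, rfl⟩ := h; exact (hf i x).symm
  | refl => rfl
  | symm _ _ _ ih => exact ih.symm
  | trans _ _ _ _ _ ih1 ih2 => exact ih1.trans ih2

/-- For commuting involutions `σ₁, …, σ_r` of a finite set and signs `ε i ∈ {±1}`, the
joint `ε`-eigenspace of functions `X → ℂ` has dimension at most that of the joint
`(+1,…,+1)`-eigenspace. -/
theorem stmt18 {X : Type*} [Fintype X] {r : ℕ} (σ : Fin r → X → X)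
    (hinv : ∀ i, σ i ∘ σ i = id) (hcomm : ∀ i j, σ i ∘ σ j = σ j ∘ σ i)
    (ε : Fin r → ℂ) (hε : ∀ i, ε i = 1 ∨ ε i = -1) :
    Module.finrank ℂ (jointEigenspace σ ε) ≤
      Module.finrank ℂ (jointEigenspace σ (fun _ => 1)) := by
  classical
  have hε0 : ∀ i, ε i ≠ 0 := by
    intro i
    rcases hε i with h | h <;> rw [h] <;> norm_num
  set s := sigmaSetoid σ with hs
  let Q := Quotient s
  have : Finite Q := Quotient.finite s
  have : Fintype Q := Fintype.ofFinite Q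
  -- injective linear map from the ε-eigenspace to functions on orbits
  let L : jointEigenspace σ ε →ₗ[ℂ] (Q → ℂ) :=
    { toFun := fun f q => (f : X → ℂ) q.out
      map_add' := fun f g => rfl
      map_smul' := fun c f => rfl }
  have hL : Function.Injective L := by
    intro f g hfg
    ext x
    have h1 : ((f : X → ℂ) - (g : X → ℂ)) ∈ jointEigenspace σ ε :=
      (jointEigenspace σ ε).sub_mem f.2 g.2
    have h2 : ∀ q : Q, (f : X → ℂ) q.out - (g : X → ℂ) q.out = 0 := by
      intro q
      have := congrFun hfg q
      simpa [L, sub_eq_zero] using this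
    have hxy : Relation.EqvGen (fun x y => ∃ i, y = σ i x) x (Quotient.mk s x).out := by
      have := (Quotient.mk_out (s := s) x)
      exact (Relation.EqvGen.symm _ _ this)
    have := (zero_iff_of_eqvGen hε0 h1 hxy).mpr (h2 (Quotient.mk s x))
    have : (f : X → ℂ) x - (g : X → ℂ) x = 0 := this
    have := sub_eq_zero.mp this
    exact this
  -- injective linear map from functions on orbits to the +-eigenspace
  let M : (Q → ℂ) →ₗ[ℂ] jointEigenspace σ (fun _ => 1) :=
    { toFun := fun g =>
        ⟨fun x => g (Quotient.mk s x), by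
          intro i x
          have : Quotient.mk s (σ i x) = Quotient.mk s x := by
            apply Quotient.sound
            exact Relation.EqvGen.symm _ _ (Relation.EqvGen.rel _ _ ⟨i, rfl⟩)
          simp [this]⟩
      map_add' := fun f g => rfl
      map_smul' := fun c f => rfl }
  have hM : Function.Injective M := by
    intro f g hfg
    ext q
    induction q using Quotient.inductionOn with
    | h x => exact congrFun (congrArg (Subtype.val) hfg) x
  calc Module.finrank ℂ (jointEigenspace σ ε)
      ≤ Module.finrank ℂ (Q → ℂ) := LinearMap.finrank_le_finrank_of_injective hL
    _ ≤ Module.finrank ℂ (jointEigenspace σ (fun _ => 1)) :=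
        LinearMap.finrank_le_finrank_of_injective hM
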